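/- arXiv:math/0005159 — 5 statements merged into one kernel-verified Lean document; each statement's English description precedes it below -/
import Mathlib

section
/- Let L be a CSL on H, let x₁, x₂ ∈ H be closed vectors for Alg L, let P₁ be the projection onto {Alg L · x₁} (which lies in L), and set x = x₁ + (1-P₁)x₂. Then {Alg L · x} = {Alg L · x₁} ∨ {Alg L · x₂}, i.e., the orbit of x equals the closed span of the orbits of x₁ and x₂, and this span equals the orbit (is singly generated). -/
noncomputable section

open scoped InnerProductSpace

variable {H : Type*} [NormedAddCommGroup H] [InnerProductSpace ℂ H] [CompleteSpace H]

/-- `P` is an orthogonal projection on `H`. -/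
def IsOrthProj (P : H →L[ℂ] H) : Prop := IsSelfAdjoint P ∧ P ∘L P = P

/-- The usual order on orthogonal projections: `P ≤ Q` iff `Q P = P` (range containment). -/
def pLE (P Q : H →L[ℂ] H) : Prop := Q ∘L P = P

/-- An atom of the lattice `L`: a nonzero interval projection `E - F` (`E, F ∈ L`, `F ≤ E`)
containing no interval projection other than `0` and itself. -/
def IsAtomOf (L : Set (H →L[ℂ] H)) (A : H →L[ℂ] H) : Prop :=
  A ≠ 0 ∧ (∃ E ∈ L, ∃ F ∈ L, pLE F E ∧ A = E - F) ∧
    ∀ E ∈ L, ∀ F ∈ L, pLE F E → pLE (E - F) A → E - F = 0 ∨ E - F = A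

/-- `L` is a commutative subspace lattice (CSL): a strongly closed complete lattice of
mutually commuting orthogonal projections containing `0` and `I`.  Completeness is expressed
by the existence, for every subset, of a member of `L` realizing the honest infimum
(intersection of ranges) and the honest supremum (closed span of ranges). -/
def IsCSL (L : Set (H →L[ℂ] H)) : Prop :=
  (∀ P ∈ L, IsOrthProj P) ∧
  (∀ P ∈ L, ∀ Q ∈ L, P ∘L Q = Q ∘L P) ∧
  (0 : H →L[ℂ] H) ∈ L ∧ (1 : H →L[ℂ] H) ∈ L ∧
  (∀ S ⊆ L, ∃ P ∈ L, (∀ Q ∈ S, pLE P Q) ∧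
      LinearMap.range (P : H →ₗ[ℂ] H) = ⨅ Q ∈ S, LinearMap.range (Q : H →ₗ[ℂ] H)) ∧
  (∀ S ⊆ L, ∃ P ∈ L, (∀ Q ∈ S, pLE Q P) ∧
      LinearMap.range (P : H →ₗ[ℂ] H) = (⨆ Q ∈ S, LinearMap.range (Q : H →ₗ[ℂ] H)).topologicalClosure)

/-- `Alg L`: the algebra of operators leaving every projection of `L` invariant. -/
def AlgL (L : Set (H →L[ℂ] H)) : Set (H →L[ℂ] H) :=
  {T | ∀ P ∈ L, (1 - P) ∘L (T ∘L P) = 0}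

/-- The (not necessarily closed) orbit `{Alg L · x}` of a vector `x`. -/
def orbit (L : Set (H →L[ℂ] H)) (x : H) : Set H :=
  {y | ∃ T ∈ AlgL L, T x = y}

/-- `P` is hyperatomic in `L`: `P = E(A₁, …, Aₖ)`, the smallest projection of `L`
dominating finitely many atoms `A₁, …, Aₖ` of `L`. -/
def HyperatomicIn (L : Set (H →L[ℂ] H)) (P : H →L[ℂ] H) : Prop :=
  ∃ (k : ℕ) (A : Fin k → H →L[ℂ] H), (∀ j, IsAtomOf L (A j)) ∧
    (∀ j, pLE (A j) P) ∧ ∀ F ∈ L, (∀ j, pLE (A j) F) → pLE P F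


/-- Pointwise invariance consequence of membership in `AlgL`. -/
lemma algL_fix {L : Set (H →L[ℂ] H)} {T : H →L[ℂ] H} (hT : T ∈ AlgL L)
    {P : H →L[ℂ] H} (hP : P ∈ L) (u : H) : T (P u) = P (T (P u)) := by
  have h2 := congrArg (fun S : H →L[ℂ] H => S u) (hT P hP)
  simpa [ContinuousLinearMap.comp_apply, ContinuousLinearMap.sub_apply,
    ContinuousLinearMap.one_apply, sub_eq_zero] using h2

lemma mem_algL_of {L : Set (H →L[ℂ] H)} {T : H →L[ℂ] H}
    (h : ∀ P ∈ L, ∀ u, T (P u) = P (T (P u))) : T ∈ AlgL L := by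
  intro P hP
  ext u
  simp only [ContinuousLinearMap.comp_apply, ContinuousLinearMap.sub_apply,
    ContinuousLinearMap.one_apply, ContinuousLinearMap.zero_apply, sub_eq_zero]
  exact h P hP u

lemma one_mem_algL {L : Set (H →L[ℂ] H)} (hidem : ∀ P ∈ L, ∀ u, P (P u) = P u) :
    (1 : H →L[ℂ] H) ∈ AlgL L :=
  mem_algL_of fun P hP u => by simp [hidem P hP u]

lemma comp_mem_algL {L : Set (H →L[ℂ] H)} {S T : H →L[ℂ] H}
    (hS : S ∈ AlgL L) (hT : T ∈ AlgL L) : S ∘L T ∈ AlgL L :=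
  mem_algL_of fun P hP u => by
    simp only [ContinuousLinearMap.comp_apply]
    rw [algL_fix hT hP u]
    exact algL_fix hS hP (T (P u))

lemma add_mem_algL {L : Set (H →L[ℂ] H)} {S T : H →L[ℂ] H}
    (hS : S ∈ AlgL L) (hT : T ∈ AlgL L) : S + T ∈ AlgL L :=
  mem_algL_of fun P hP u => by
    simp only [ContinuousLinearMap.add_apply, map_add]
    rw [← algL_fix hS hP u, ← algL_fix hT hP u]

lemma sub_mem_algL {L : Set (H →L[ℂ] H)} {S T : H →L[ℂ] H}
    (hS : S ∈ AlgL L) (hT : T ∈ AlgL L) : S - T ∈ AlgL L :=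
  mem_algL_of fun P hP u => by
    simp only [ContinuousLinearMap.sub_apply, map_sub]
    rw [← algL_fix hS hP u, ← algL_fix hT hP u]

lemma mem_algL_of_mem {L : Set (H →L[ℂ] H)}
    (hcomm : ∀ P ∈ L, ∀ Q ∈ L, P ∘L Q = Q ∘L P)
    (hidem : ∀ P ∈ L, ∀ u, P (P u) = P u)
    {P' : H →L[ℂ] H} (hP' : P' ∈ L) : P' ∈ AlgL L :=
  mem_algL_of fun P hP u => by
    have hc := congrArg (fun S : H →L[ℂ] H => S (P u)) (hcomm P hP P' hP')
    simp only [ContinuousLinearMap.comp_apply] at hc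
    rw [hc, hidem P hP u]

/-- if `x₁, x₂` are closed vectors for `Alg L`, with `P₁, P₂ ∈ L` the
projections onto their orbits, then the orbit of `x = x₁ + (1-P₁)x₂` equals the closed span
of the two orbits (which is itself the singly generated orbit of `x`). -/
theorem stmt11 (L : Set (H →L[ℂ] H)) (hL : IsCSL L) (x₁ x₂ : H)
    (h₁ : IsClosed (orbit L x₁)) (h₂ : IsClosed (orbit L x₂))
    (P₁ P₂ : H →L[ℂ] H) (hP₁L : P₁ ∈ L) (hP₂L : P₂ ∈ L)
    (hP₁ : (LinearMap.range (P₁ : H →ₗ[ℂ] H) : Set H) = orbit L x₁)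
    (hP₂ : (LinearMap.range (P₂ : H →ₗ[ℂ] H) : Set H) = orbit L x₂) :
    orbit L (x₁ + (1 - P₁) x₂) =
      {z : H | ∃ a ∈ orbit L x₁, ∃ b ∈ orbit L x₂, z = a + b} ∧
    IsClosed {z : H | ∃ a ∈ orbit L x₁, ∃ b ∈ orbit L x₂, z = a + b} := by
  obtain ⟨hproj, hcomm, -, -, -, -⟩ := hL
  have hidem : ∀ P ∈ L, ∀ u, P (P u) = P u := fun P hP u => by
    have := congrArg (fun S : H →L[ℂ] H => S u) (hproj P hP).2
    simpa [ContinuousLinearMap.comp_apply] using this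
  have hone : (1 : H →L[ℂ] H) ∈ AlgL L := one_mem_algL hidem
  have hP₁A : P₁ ∈ AlgL L := mem_algL_of_mem hcomm hidem hP₁L
  have h1mP₁ : (1 - P₁ : H →L[ℂ] H) ∈ AlgL L := sub_mem_algL hone hP₁A
  have hx₁mem : x₁ ∈ orbit L x₁ := ⟨1, hone, by simp⟩
  have hx₁range : x₁ ∈ (LinearMap.range (P₁ : H →ₗ[ℂ] H) : Set H) := by rw [hP₁]; exact hx₁mem
  obtain ⟨u₁, hu₁⟩ := hx₁range
  have hP₁x₁ : P₁ x₁ = x₁ := by rw [← hu₁]; exact hidem P₁ hP₁L u₁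
  have hP₁x : P₁ (x₁ + (1 - P₁) x₂) = x₁ := by
    simp only [map_add, ContinuousLinearMap.sub_apply, ContinuousLinearMap.one_apply, map_sub,
      hidem P₁ hP₁L x₂, hP₁x₁]
    abel
  have hrest : (x₁ + (1 - P₁) x₂) - P₁ (x₁ + (1 - P₁) x₂) = x₂ - P₁ x₂ := by
    rw [hP₁x]
    simp [ContinuousLinearMap.sub_apply]
  obtain ⟨U, hU, hUx₁⟩ : P₁ x₂ ∈ orbit L x₁ := by
    rw [← hP₁]; exact ⟨x₂, rfl⟩
  constructor
  · ext z
    constructor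
    · rintro ⟨T, hT, rfl⟩
      refine ⟨T x₁, ⟨T, hT, rfl⟩, (T ∘L (1 - P₁)) x₂, ⟨T ∘L (1 - P₁), comp_mem_algL hT h1mP₁, rfl⟩, ?_⟩
      simp [map_add]
    · rintro ⟨a, ⟨S, hS, rfl⟩, b, ⟨T, hT, rfl⟩, rfl⟩
      refine ⟨S ∘L P₁ + (T ∘L U) ∘L P₁ + T ∘L (1 - P₁),
        add_mem_algL (add_mem_algL (comp_mem_algL hS hP₁A)
          (comp_mem_algL (comp_mem_algL hT hU) hP₁A)) (comp_mem_algL hT h1mP₁), ?_⟩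
      have : (1 - P₁) (x₁ + (1 - P₁) x₂) = x₂ - P₁ x₂ := by
        simpa [ContinuousLinearMap.sub_apply, ContinuousLinearMap.one_apply] using hrest
      simp only [ContinuousLinearMap.add_apply, ContinuousLinearMap.comp_apply, hP₁x, this,
        hUx₁, map_sub]
      abel
  · have hcPQ : ∀ u, P₁ (P₂ u) = P₂ (P₁ u) := fun u => by
      have := congrArg (fun S : H →L[ℂ] H => S u) (hcomm P₁ hP₁L P₂ hP₂L)
      simpa [ContinuousLinearMap.comp_apply] using this
    set Q : H →L[ℂ] H := P₁ + P₂ - P₂ ∘L P₁ with hQ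
    have hQapp : ∀ z, Q z = P₁ z + P₂ z - P₂ (P₁ z) := fun z => by
      simp [hQ, ContinuousLinearMap.sub_apply, ContinuousLinearMap.add_apply,
        ContinuousLinearMap.comp_apply]
    have hset : {z : H | ∃ a ∈ orbit L x₁, ∃ b ∈ orbit L x₂, z = a + b} = {z : H | Q z = z} := by
      ext z
      constructor
      · rintro ⟨a, ha, b, hb, rfl⟩
        rw [← hP₁] at ha
        rw [← hP₂] at hb
        obtain ⟨u, rfl⟩ := ha
        obtain ⟨v, rfl⟩ := hb
        show Q (P₁ u + P₂ v) = P₁ u + P₂ v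
        rw [hQapp]
        simp only [map_add, hidem P₁ hP₁L, hidem P₂ hP₂L, hcPQ]
        abel
      · intro hz
        refine ⟨P₁ z, ?_, P₂ (z - P₁ z), ?_, ?_⟩
        · rw [← hP₁]; exact ⟨z, rfl⟩
        · rw [← hP₂]; exact ⟨z - P₁ z, rfl⟩
        · have hz' : Q z = z := hz
          rw [hQapp] at hz'
          rw [map_sub]
          have h3 : P₁ z + P₂ z - P₂ (P₁ z) = P₁ z + (P₂ z - P₂ (P₁ z)) := by abel
          exact hz'.symm.trans h3
    rw [hset]
    have : {z : H | Q z = z} = {z : H | (Q - 1) z = 0} := by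
      ext z
      simp [ContinuousLinearMap.sub_apply, sub_eq_zero]
    rw [this]
    exact isClosed_eq ((Q - 1).continuous) continuous_const
end
end

section
/- Let L be a hyperatomic CSL on H and let A ⊆ B(H) be an algebra with Lat A = L and x ∈ [A·x] for every x ∈ H. If {A·x} = {Alg L · x} for every x ∈ H (A is Alg L-transitive), then every vector of H is closed for A, i.e., {A·x} is closed for all x. -/
noncomputable section

open scoped InnerProductSpace

variable {H : Type*} [NormedAddCommGroup H] [InnerProductSpace ℂ H] [CompleteSpace H]

section Aux

variable (L : Set (H →L[ℂ] H))

private lemma idem_mem_range_iff {P : H →L[ℂ] H} (hP : P * P = P) {z : H} :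
    z ∈ LinearMap.range (P : H →ₗ[ℂ] H) ↔ P z = z := by
  constructor
  · rintro ⟨w, rfl⟩
    calc P (P w) = (P * P) w := rfl
    _ = P w := by rw [hP]
  · intro h; exact ⟨z, h⟩

private lemma proj_ext' {P Q : H →L[ℂ] H} (hP1 : star P = P) (hP2 : P * P = P)
    (hQ1 : star Q = Q) (hQ2 : Q * Q = Q)
    (h : LinearMap.range (P : H →ₗ[ℂ] H) = LinearMap.range (Q : H →ₗ[ℂ] H)) : P = Q := by
  have h1 : Q * P = P := by
    ext z
    show Q (P z) = P z
    exact (idem_mem_range_iff hQ2).1 (h ▸ ⟨z, rfl⟩)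
  have h2 : P * Q = Q := by
    ext z
    show P (Q z) = Q z
    exact (idem_mem_range_iff hP2).1 (h ▸ ⟨z, rfl⟩)
  calc P = star P := hP1.symm
  _ = star (Q * P) := by rw [h1]
  _ = star P * star Q := by rw [star_mul]
  _ = P * Q := by rw [hP1, hQ1]
  _ = Q := h2

private lemma mul_mem' (hL : IsCSL L) {G K : H →L[ℂ] H} (hG : G ∈ L) (hK : K ∈ L) :
    G * K ∈ L := by
  obtain ⟨hproj, hcomm, -, -, hinf, -⟩ := hL
  have hGid : G * G = G := (hproj G hG).2
  have hKid : K * K = K := (hproj K hK).2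
  have hGsa : star G = G := (hproj G hG).1.star_eq
  have hKsa : star K = K := (hproj K hK).1.star_eq
  have hGK : G * K = K * G := hcomm G hG K hK
  obtain ⟨P, hPL, -, hPrange⟩ := hinf {G, K} (by
    intro Q hQ
    simp only [Set.mem_insert_iff, Set.mem_singleton_iff] at hQ
    rcases hQ with rfl | rfl
    exacts [hG, hK])
  have hsa : star (G * K) = G * K := by rw [star_mul, hKsa, hGsa, ← hGK]
  have hid : (G * K) * (G * K) = G * K := by
    have h1 : K * (G * K) = G * K := by
      rw [← mul_assoc, ← hGK, mul_assoc, hKid]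
    rw [mul_assoc, h1, ← mul_assoc, hGid]
  have hrange : LinearMap.range ((G * K : H →L[ℂ] H) : H →ₗ[ℂ] H) = LinearMap.range (P : H →ₗ[ℂ] H) := by
    rw [hPrange, iInf_insert, iInf_singleton]
    ext z
    simp only [Submodule.mem_inf, idem_mem_range_iff hid, idem_mem_range_iff hGid,
      idem_mem_range_iff hKid, ContinuousLinearMap.mul_apply]
    constructor
    · intro h
      have hGz : G z = z := by
        conv_lhs => rw [← h]
        calc G (G (K z)) = (G * G) (K z) := rfl
        _ = G (K z) := by rw [hGid]
        _ = z := h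
      have hKz : K z = z := by
        conv_lhs => rw [← h]
        calc K (G (K z)) = ((K * G) * K) z := rfl
        _ = ((G * K) * K) z := by rw [hGK]
        _ = (G * (K * K)) z := by rw [mul_assoc]
        _ = (G * K) z := by rw [hKid]
        _ = G (K z) := rfl
        _ = z := h
      exact ⟨hGz, hKz⟩
    · rintro ⟨hGz, hKz⟩
      rw [hKz, hGz]
  have heq : G * K = P :=
    proj_ext' hsa hid (hproj P hPL).1.star_eq (hproj P hPL).2 hrange
  rw [heq]; exact hPL

private lemma join_mem' (hL : IsCSL L) {G K : H →L[ℂ] H} (hG : G ∈ L) (hK : K ∈ L) :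
    G + K - G * K ∈ L := by
  obtain ⟨hproj, hcomm, -, -, -, hsup⟩ := hL
  have hGid : G * G = G := (hproj G hG).2
  have hKid : K * K = K := (hproj K hK).2
  have hGsa : star G = G := (hproj G hG).1.star_eq
  have hKsa : star K = K := (hproj K hK).1.star_eq
  have hGK : G * K = K * G := hcomm G hG K hK
  set J := G + K - G * K with hJdef
  have hJG : J * G = G := by
    calc J * G = G * G + K * G - G * K * G := by rw [hJdef, sub_mul, add_mul]
    _ = G + K * G - G * (K * G) := by rw [hGid, mul_assoc]
    _ = G + K * G - G * (G * K) := by rw [← hGK]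
    _ = G + K * G - (G * G) * K := by rw [mul_assoc]
    _ = G + K * G - K * G := by rw [hGid, hGK]
    _ = G := by rw [add_sub_cancel_right]
  have hJK : J * K = K := by
    have h1 : J * K = G * K + K * K - G * K * K := by rw [hJdef, sub_mul, add_mul]
    rw [h1, mul_assoc, hKid, add_sub_cancel_left]
  have hJid : J * J = J := by
    have h1 : J * J = J * G + J * K - J * (G * K) := by
      conv_lhs => rw [show J * J = J * (G + K - G * K) from by rw [← hJdef]]
      rw [mul_sub, mul_add]
    rw [h1, hJG, hJK, ← mul_assoc, hJG]
  have hJsa : star J = J := by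
    rw [hJdef, star_sub, star_add, hGsa, hKsa, star_mul, hKsa, hGsa, ← hGK]
  obtain ⟨P, hPL, -, hPrange⟩ := hsup {G, K} (by
    intro Q hQ
    simp only [Set.mem_insert_iff, Set.mem_singleton_iff] at hQ
    rcases hQ with rfl | rfl
    exacts [hG, hK])
  have hJrange : LinearMap.range (J : H →ₗ[ℂ] H) = LinearMap.range (G : H →ₗ[ℂ] H) ⊔ LinearMap.range (K : H →ₗ[ℂ] H) := by
    apply le_antisymm
    · rintro z ⟨w, rfl⟩
      apply Submodule.mem_sup.2
      refine ⟨G w, ⟨w, rfl⟩, K (w - G w), ⟨w - G w, rfl⟩, ?_⟩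
      have h1 : K (G w) = G (K w) := by
        calc K (G w) = (K * G) w := rfl
        _ = (G * K) w := by rw [← hGK]
        _ = G (K w) := rfl
      have h2 : J w = G w + K w - G (K w) := by
        simp [hJdef, ContinuousLinearMap.sub_apply, ContinuousLinearMap.add_apply,
          ContinuousLinearMap.mul_apply]
      calc G w + K (w - G w) = G w + (K w - K (G w)) := by rw [map_sub]
      _ = G w + (K w - G (K w)) := by rw [h1]
      _ = J w := by rw [h2]; abel
    · apply sup_le
      · rintro z ⟨w, rfl⟩
        refine ⟨G w, ?_⟩
        calc J (G w) = (J * G) w := rfl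
        _ = G w := by rw [hJG]
      · rintro z ⟨w, rfl⟩
        refine ⟨K w, ?_⟩
        calc J (K w) = (J * K) w := rfl
        _ = K w := by rw [hJK]
  have hJclosed : IsClosed (LinearMap.range (J : H →ₗ[ℂ] H) : Set H) := by
    have hset : (LinearMap.range (J : H →ₗ[ℂ] H) : Set H) = {z | J z = z} := by
      ext z
      simp only [SetLike.mem_coe, Set.mem_setOf_eq]
      exact idem_mem_range_iff hJid
    rw [hset]
    exact isClosed_eq J.continuous continuous_id
  have hPJ : LinearMap.range (P : H →ₗ[ℂ] H) = LinearMap.range (J : H →ₗ[ℂ] H) := by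
    rw [hPrange, iSup_insert, iSup_singleton, ← hJrange]
    exact le_antisymm (Submodule.topologicalClosure_minimal _ le_rfl hJclosed)
      (Submodule.le_topologicalClosure _)
  have heq : P = J :=
    proj_ext' (hproj P hPL).1.star_eq (hproj P hPL).2 hJsa hJid hPJ
  rw [← heq]; exact hPL

private lemma inner_sa {P : H →L[ℂ] H} (hP : IsSelfAdjoint P) (v w : H) :
    ⟪P v, w⟫_ℂ = ⟪v, P w⟫_ℂ := by
  conv_lhs => rw [← ContinuousLinearMap.isSelfAdjoint_iff'.1 hP]
  exact ContinuousLinearMap.adjoint_inner_left P w v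

private lemma atom_facts (hL : IsCSL L) {C : H →L[ℂ] H} (hC : IsAtomOf L C) :
    (C * C = C) ∧ (star C = C) ∧ (∀ G ∈ L, C * G = G * C) ∧
      (∀ G ∈ L, C * G = 0 ∨ C * G = C) := by
  have hL' := hL
  obtain ⟨hproj, hcomm, -, -, -, -⟩ := hL
  obtain ⟨-, ⟨E, hE, F, hF, hFE, hCEF⟩, hmin⟩ := hC
  subst hCEF
  have hEid : E * E = E := (hproj E hE).2
  have hFid : F * F = F := (hproj F hF).2
  have hEsa : star E = E := (hproj E hE).1.star_eq
  have hFsa : star F = F := (hproj F hF).1.star_eq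
  have hEF : E * F = F := hFE
  have hFEc : F * E = E * F := hcomm F hF E hE
  have hidem : (E - F) * (E - F) = E - F := by
    rw [sub_mul, mul_sub, mul_sub, hEid, hEF, hFid, hFEc, hEF]
    abel
  have hstar : star (E - F) = E - F := by rw [star_sub, hEsa, hFsa]
  refine ⟨hidem, hstar, ?_, ?_⟩
  · intro G hG
    have h1 : E * G = G * E := hcomm E hE G hG
    have h2 : F * G = G * F := hcomm F hF G hG
    rw [sub_mul, mul_sub, h1, h2]
  · intro G hG
    have hEG : E * G ∈ L := mul_mem' L hL' hE hG
    have hFG : F * G ∈ L := mul_mem' L hL' hF hG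
    have hGF : G * F = F * G := hcomm G hG F hF
    have hGid : G * G = G := (hproj G hG).2
    have h1 : pLE (F * G) (E * G) := by
      show (E * G) * (F * G) = F * G
      calc (E * G) * (F * G) = E * (G * (F * G)) := by rw [mul_assoc]
      _ = E * ((G * F) * G) := by rw [← mul_assoc G F G]
      _ = E * ((F * G) * G) := by rw [hGF]
      _ = E * (F * (G * G)) := by rw [mul_assoc F G G]
      _ = E * (F * G) := by rw [hGid]
      _ = (E * F) * G := by rw [← mul_assoc]
      _ = F * G := by rw [hEF]
    have h2 : pLE (E * G - F * G) (E - F) := by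
      show (E - F) * (E * G - F * G) = E * G - F * G
      have hEEG : E * (E * G) = E * G := by rw [← mul_assoc, hEid]
      have hEFG : E * (F * G) = F * G := by rw [← mul_assoc, hEF]
      have hFEG : F * (E * G) = F * G := by rw [← mul_assoc, hFEc, hEF]
      have hFFG : F * (F * G) = F * G := by rw [← mul_assoc, hFid]
      rw [sub_mul, mul_sub, mul_sub, hEEG, hEFG, hFEG, hFFG]
      abel
    rcases hmin (E * G) hEG (F * G) hFG h1 h2 with h | h
    · left; rw [sub_mul]; exact h
    · right; rw [sub_mul]; exact h

private lemma algL_zero : (0 : H →L[ℂ] H) ∈ AlgL L := by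
  intro P hP
  rw [ContinuousLinearMap.zero_comp, ContinuousLinearMap.comp_zero]

private lemma algL_add {S T : H →L[ℂ] H} (hS : S ∈ AlgL L) (hT : T ∈ AlgL L) :
    S + T ∈ AlgL L := by
  intro P hP
  rw [ContinuousLinearMap.add_comp, ContinuousLinearMap.comp_add, hS P hP, hT P hP, add_zero]

private lemma rankone_mem' (hL : IsCSL L) {v y : H}
    (h : ∀ P ∈ L, P v = 0 ∨ P y = y) :
    ((innerSL ℂ v).smulRight y) ∈ AlgL L := by
  intro P hP
  have hPsa : IsSelfAdjoint P := (hL.1 P hP).1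
  rcases h P hP with h0 | h1
  · have hz : ((innerSL ℂ v).smulRight y) ∘L P = 0 := by
      ext z
      simp only [ContinuousLinearMap.comp_apply, ContinuousLinearMap.smulRight_apply,
        innerSL_apply_apply, ContinuousLinearMap.zero_apply]
      have hv : ⟪v, P z⟫_ℂ = 0 := by
        rw [← inner_sa hPsa v z, h0, inner_zero_left]
      rw [hv, zero_smul]
    rw [hz, ContinuousLinearMap.comp_zero]
  · ext z
    simp only [ContinuousLinearMap.comp_apply, ContinuousLinearMap.sub_apply,
      ContinuousLinearMap.one_apply, ContinuousLinearMap.smulRight_apply,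
      innerSL_apply_apply, ContinuousLinearMap.zero_apply, map_smul, h1, sub_self, smul_zero]

end Aux

/-- let `L` be a hyperatomic CSL and `A` an algebra with `Lat A = L` and
`x ∈ [A·x]` for all `x`.  If `A` is `Alg L`-transitive then every vector is closed for `A`. -/
theorem stmt12 (L : Set (H →L[ℂ] H)) (hL : IsCSL L)
    (hhyper : ∀ P ∈ L, HyperatomicIn L P)
    (A : NonUnitalSubalgebra ℂ (H →L[ℂ] H))
    (hlat : ∀ K : Submodule ℂ H, IsClosed (K : Set H) →
      ((∀ T ∈ A, ∀ z ∈ K, T z ∈ K) ↔ ∃ P ∈ L, LinearMap.range (P : H →ₗ[ℂ] H) = K))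
    (happrox : ∀ x : H, x ∈ closure {y : H | ∃ T ∈ A, T x = y})
    (htrans : ∀ x : H, {y : H | ∃ T ∈ A, T x = y} = orbit L x) :
    ∀ x : H, IsClosed {y : H | ∃ T ∈ A, T x = y} := by
  intro x
  rw [htrans x]
  classical
  have hL' := hL
  obtain ⟨hproj, hcomm, h0L, h1L, hinf, hsup⟩ := hL
  -- the smallest member of L whose range contains x
  obtain ⟨Q, hQL, hQle, hQrange⟩ := hinf {G | G ∈ L ∧ x ∈ LinearMap.range (G : H →ₗ[ℂ] H)}
    (fun G hG => hG.1)
  have hQid : Q * Q = Q := (hproj Q hQL).2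
  have hxQ : Q x = x := by
    have hx : x ∈ LinearMap.range (Q : H →ₗ[ℂ] H) := by
      rw [hQrange]
      simp only [Submodule.mem_iInf]
      exact fun G hG => hG.2
    exact (idem_mem_range_iff hQid).1 hx
  -- a hyperatomic family for Q
  obtain ⟨k, C, hatom, hCQ, hQmin⟩ := hhyper Q hQL
  have hCid : ∀ j, C j * C j = C j := fun j => (atom_facts L hL' (hatom j)).1
  have hCcomm : ∀ j, ∀ G ∈ L, C j * G = G * C j :=
    fun j => (atom_facts L hL' (hatom j)).2.2.1
  have hCdich : ∀ j, ∀ G ∈ L, C j * G = 0 ∨ C j * G = C j :=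
    fun j => (atom_facts L hL' (hatom j)).2.2.2
  -- M j : the largest member of L killing the atom C j
  have hMex : ∀ j : Fin k, ∃ M, M ∈ L ∧ (∀ G, G ∈ L → C j * G = 0 → M * G = G) ∧
      C j * M = 0 := by
    intro j
    obtain ⟨M, hML, hMle, hMrange⟩ := hsup {G | G ∈ L ∧ C j * G = 0} (fun G hG => hG.1)
    refine ⟨M, hML, fun G hGL hCG => hMle G ⟨hGL, hCG⟩, ?_⟩
    have hker : LinearMap.range (M : H →ₗ[ℂ] H) ≤ LinearMap.ker (C j : H →ₗ[ℂ] H) := by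
      rw [hMrange]
      apply Submodule.topologicalClosure_minimal
      · apply iSup₂_le
        intro G hG
        rintro z ⟨w, rfl⟩
        have hzero : (C j) (G w) = 0 := by
          calc (C j) (G w) = ((C j) * G) w := rfl
          _ = (0 : H →L[ℂ] H) w := by rw [hG.2]
          _ = 0 := rfl
        exact LinearMap.mem_ker.2 hzero
      · exact ContinuousLinearMap.isClosed_ker (C j)
    ext z
    have hmem : M z ∈ LinearMap.ker (C j : H →ₗ[ℂ] H) := hker ⟨z, rfl⟩
    have := LinearMap.mem_ker.1 hmem
    calc ((C j) * M) z = (C j) (M z) := rfl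
    _ = 0 := this
    _ = (0 : H →L[ℂ] H) z := rfl
  choose M hML hMle hCM using hMex
  -- Ee j : the smallest member of L dominating the atom C j
  have hEex : ∀ j : Fin k, ∃ E', E' ∈ L ∧ (∀ G, G ∈ L → G * C j = C j → G * E' = E') ∧
      E' * C j = C j := by
    intro j
    obtain ⟨E', hE'L, hE'le, hE'range⟩ := hinf {G | G ∈ L ∧ G * C j = C j}
      (fun G hG => hG.1)
    refine ⟨E', hE'L, fun G hGL hGC => hE'le G ⟨hGL, hGC⟩, ?_⟩
    ext z
    show E' ((C j) z) = (C j) z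
    have hmem : (C j) z ∈ LinearMap.range (E' : H →ₗ[ℂ] H) := by
      rw [hE'range]
      simp only [Submodule.mem_iInf]
      intro G hG
      refine ⟨(C j) z, ?_⟩
      calc G ((C j) z) = (G * C j) z := rfl
      _ = (C j) z := by rw [hG.2]
    exact (idem_mem_range_iff (hproj E' hE'L).2).1 hmem
  choose Ee hEL hEle hEC using hEex
  have hEid : ∀ j, Ee j * Ee j = Ee j := fun j => (hproj (Ee j) (hEL j)).2
  -- x is not fixed by M j
  have hMx : ∀ j, M j x ≠ x := by
    intro j hMxx
    have hMD : M j ∈ {G | G ∈ L ∧ x ∈ LinearMap.range (G : H →ₗ[ℂ] H)} := ⟨hML j, ⟨x, hMxx⟩⟩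
    have h1 : M j * Q = Q := hQle (M j) hMD
    have hQC : Q * C j = C j := hCQ j
    have h2 : C j = 0 := by
      calc C j = Q * C j := hQC.symm
      _ = (M j * Q) * C j := by rw [h1]
      _ = M j * (Q * C j) := by rw [mul_assoc]
      _ = M j * C j := by rw [hQC]
      _ = C j * M j := (hCcomm j (M j) (hML j)).symm
      _ = 0 := hCM j
    exact (hatom j).1 h2
  -- the vectors v j
  have hvinner : ∀ j, ⟪x - M j x, x⟫_ℂ ≠ 0 := by
    intro j
    have hvne : x - M j x ≠ 0 := by
      intro h
      exact hMx j (sub_eq_zero.1 h).symm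
    have hMsa : IsSelfAdjoint (M j) := (hproj (M j) (hML j)).1
    have hMv : (M j) (x - M j x) = 0 := by
      rw [map_sub]
      have hMid : M j * M j = M j := (hproj (M j) (hML j)).2
      have hMM : (M j) ((M j) x) = (M j) x := by
        calc (M j) ((M j) x) = ((M j) * (M j)) x := rfl
        _ = (M j) x := by rw [hMid]
      rw [hMM, sub_self]
    have h0 : ⟪x - M j x, M j x⟫_ℂ = 0 := by
      rw [← inner_sa hMsa (x - M j x) x, hMv, inner_zero_left]
    have h1 : ⟪x - M j x, x⟫_ℂ = ⟪x - M j x, x - M j x⟫_ℂ := by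
      have hsplit : (x - M j x) + M j x = x := sub_add_cancel x (M j x)
      calc ⟪x - M j x, x⟫_ℂ = ⟪x - M j x, (x - M j x) + M j x⟫_ℂ := by rw [hsplit]
      _ = ⟪x - M j x, x - M j x⟫_ℂ + ⟪x - M j x, M j x⟫_ℂ := inner_add_right _ _ _
      _ = ⟪x - M j x, x - M j x⟫_ℂ := by rw [h0, add_zero]
    rw [h1]
    exact inner_self_ne_zero.2 hvne
  -- the key dichotomy for the rank-one operators
  have hdich : ∀ j, ∀ P ∈ L, P (x - M j x) = 0 ∨ P * Ee j = Ee j := by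
    intro j P hP
    rcases hCdich j P hP with h0 | h1
    · left
      have hMP : M j * P = P := hMle j P hP h0
      have hPM : P ((M j) x) = P x := by
        calc P ((M j) x) = (P * M j) x := rfl
        _ = (M j * P) x := by
              have hc : P * M j = M j * P := hcomm P hP (M j) (hML j)
              rw [hc]
        _ = P x := by rw [hMP]
      rw [map_sub, hPM, sub_self]
    · right
      refine hEle j P hP ?_
      rw [← hCcomm j P hP]
      exact h1
  -- reachability by operators in Alg L
  have hreach : ∀ s : Finset (Fin k), ∃ J, J ∈ L ∧ (∀ j ∈ s, J * Ee j = Ee j) ∧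
      ∀ z : H, J z = z → ∃ T ∈ AlgL L, T x = z := by
    intro s
    induction s using Finset.induction_on with
    | empty =>
      refine ⟨0, h0L, by simp, ?_⟩
      intro z hz
      have hz0 : z = 0 := by simpa using hz.symm
      exact ⟨0, algL_zero L, by simp [hz0]⟩
    | @insert a s ha ih =>
      obtain ⟨J, hJL, hJE, hJre⟩ := ih
      have hEaid : Ee a * Ee a = Ee a := hEid a
      have hJid : J * J = J := (hproj J hJL).2
      have hEaJ : Ee a * J = J * Ee a := hcomm (Ee a) (hEL a) J hJL
      have hJ'L : Ee a + J - Ee a * J ∈ L := join_mem' L hL' (hEL a) hJL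
      set J' := Ee a + J - Ee a * J with hJ'def
      have hJ'Ea : J' * Ee a = Ee a := by
        calc J' * Ee a = Ee a * Ee a + J * Ee a - Ee a * J * Ee a := by
              rw [hJ'def, sub_mul, add_mul]
        _ = Ee a + J * Ee a - Ee a * (J * Ee a) := by rw [hEaid, mul_assoc]
        _ = Ee a + J * Ee a - Ee a * (Ee a * J) := by rw [← hEaJ]
        _ = Ee a + J * Ee a - (Ee a * Ee a) * J := by rw [mul_assoc]
        _ = Ee a + J * Ee a - J * Ee a := by rw [hEaid, hEaJ]
        _ = Ee a := by rw [add_sub_cancel_right]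
      have hJ'J : J' * J = J := by
        calc J' * J = Ee a * J + J * J - Ee a * J * J := by rw [hJ'def, sub_mul, add_mul]
        _ = Ee a * J + J - Ee a * J := by rw [hJid, mul_assoc, hJid]
        _ = J := by rw [add_sub_cancel_left]
      refine ⟨J', hJ'L, ?_, ?_⟩
      · intro j hj
        rcases Finset.mem_insert.1 hj with rfl | hj'
        · exact hJ'Ea
        · have hje := hJE j hj'
          calc J' * Ee j = J' * (J * Ee j) := by rw [hje]
          _ = (J' * J) * Ee j := by rw [mul_assoc]
          _ = J * Ee j := by rw [hJ'J]
          _ = Ee j := hje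
      · intro z hz
        have hJEa : J (Ee a z) = Ee a (J z) := by
          calc J (Ee a z) = (J * Ee a) z := rfl
          _ = (Ee a * J) z := by rw [← hEaJ]
          _ = Ee a (J z) := rfl
        have hz_dec : Ee a z + J (z - Ee a z) = z := by
          rw [map_sub, hJEa]
          have hJ'z : J' z = Ee a z + J z - Ee a (J z) := by
            simp [hJ'def, ContinuousLinearMap.sub_apply, ContinuousLinearMap.add_apply,
              ContinuousLinearMap.mul_apply]
          calc Ee a z + (J z - Ee a (J z)) = Ee a z + J z - Ee a (J z) := by abel
          _ = J' z := hJ'z.symm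
          _ = z := hz
        obtain ⟨Ts, hTs, hTsx⟩ := hJre (J (z - Ee a z)) (by
          calc J (J (z - Ee a z)) = (J * J) (z - Ee a z) := rfl
          _ = J (z - Ee a z) := by rw [hJid])
        set c : ℂ := ⟪x - M a x, x⟫_ℂ with hc
        have hTa : ((innerSL ℂ (x - M a x)).smulRight (c⁻¹ • (Ee a z))) ∈ AlgL L := by
          apply rankone_mem' L hL'
          intro P hP
          rcases hdich a P hP with h0 | h1
          · exact Or.inl h0
          · right
            have hEaz : Ee a (Ee a z) = Ee a z := by
              calc Ee a (Ee a z) = (Ee a * Ee a) z := rfl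
              _ = Ee a z := by rw [hEaid]
            have hPz : P (Ee a z) = Ee a z := by
              calc P (Ee a z) = P (Ee a (Ee a z)) := by rw [hEaz]
              _ = (P * Ee a) (Ee a z) := rfl
              _ = Ee a (Ee a z) := by rw [h1]
              _ = Ee a z := hEaz
            rw [map_smul, hPz]
        have hTax : ((innerSL ℂ (x - M a x)).smulRight (c⁻¹ • (Ee a z))) x = Ee a z := by
          rw [ContinuousLinearMap.smulRight_apply, innerSL_apply_apply, ← hc, smul_smul,
            mul_inv_cancel₀ (hvinner a), one_smul]
        refine ⟨_ + Ts, algL_add L hTa hTs, ?_⟩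
        rw [ContinuousLinearMap.add_apply, hTax, hTsx]
        exact hz_dec
  obtain ⟨J, hJL, hJE, hJre⟩ := hreach Finset.univ
  have hJQ : J * Q = Q := by
    apply hQmin J hJL
    intro j
    show J ∘L C j = C j
    have h1 : J * Ee j = Ee j := hJE j (Finset.mem_univ j)
    have h2 : Ee j * C j = C j := hEC j
    calc J * C j = J * (Ee j * C j) := by rw [h2]
    _ = (J * Ee j) * C j := by rw [mul_assoc]
    _ = Ee j * C j := by rw [h1]
    _ = C j := h2
  have hset : orbit L x = {z : H | Q z = z} := by
    ext z
    constructor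
    · rintro ⟨T, hT, rfl⟩
      show Q (T x) = T x
      have hTQ := hT Q hQL
      have happ := congrArg (fun (S : H →L[ℂ] H) => S x) hTQ
      simp only [ContinuousLinearMap.comp_apply, ContinuousLinearMap.sub_apply,
        ContinuousLinearMap.one_apply, ContinuousLinearMap.zero_apply] at happ
      rw [hxQ] at happ
      exact (sub_eq_zero.1 happ).symm
    · intro hz
      have hJz : J z = z := by
        calc J z = J (Q z) := by rw [hz]
        _ = (J * Q) z := rfl
        _ = Q z := by rw [hJQ]
        _ = z := hz
      exact hJre z hJz
  rw [hset]
  exact isClosed_eq Q.continuous continuous_id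
end
end

section
/- Let H = ℓ²(−ℕ) with orthonormal basis (eₙ)ₙ≤−1 and let Pₙ be the projection onto the closed span of {eₖ : k < n}. Let T be the algebra of bounded operators leaving every Pₙ invariant (the nest algebra of {0,I} ∪ {Pₙ}). Then for every x ∈ H with ⟨x, e₋₁⟩ = 1 there exists an invertible operator X ∈ T with X⁻¹ ∈ T and X e₋₁ = x. -/
noncomputable section

/-! We model `H = ℓ²(-ℕ)` as `lp (fun _ : ℕ => ℂ) 2`, where the index `m : ℕ` corresponds
to the integer `-(m+1)`; thus `eVec 0` is the basis vector `e₋₁`, and the nest projection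
`Pₙ` (`n = -(m+1) ∈ -ℕ`) has range `Vsub m`, the closed span of `{e_k : k < n}`, i.e. of
`{eVec j : j > m}`. -/

abbrev Hneg : Type := lp (fun _ : ℕ => ℂ) 2

/-- The orthonormal basis vector `eₙ` with `n = -(m+1)`. -/
def eVec (m : ℕ) : Hneg := lp.single 2 m 1

/-- The range of the nest projection `Pₙ`, `n = -(m+1)`: the closed span of
`{e_k : k < n}`. -/
def Vsub (m : ℕ) : Submodule ℂ Hneg :=
  (Submodule.span ℂ {z : Hneg | ∃ j : ℕ, m < j ∧ z = eVec j}).topologicalClosure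

/-- The nest algebra of the nest `{0, I} ∪ {Pₙ : n ∈ -ℕ}`: all bounded operators leaving
every `Pₙ` invariant. -/
def NestAlg : Set (Hneg →L[ℂ] Hneg) :=
  {T | ∀ m : ℕ, ∀ z ∈ Vsub m, T z ∈ Vsub m}

/-- The coordinate-0 evaluation functional, as inner product with `eVec 0`. -/
def ev0 : Hneg →L[ℂ] ℂ := innerSL ℂ (eVec 0)

lemma ev0_apply (z : Hneg) : ev0 z = (z : ∀ _ : ℕ, ℂ) 0 := by
  simp [ev0, eVec, lp.inner_single_left]

/-- Every element of `Vsub m` has vanishing coordinate `0`. -/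
lemma ev0_eq_zero_of_mem_Vsub {m : ℕ} {z : Hneg} (hz : z ∈ Vsub m) : ev0 z = 0 := by
  have hker : Vsub m ≤ LinearMap.ker (ev0 : Hneg →ₗ[ℂ] ℂ) := by
    apply Submodule.topologicalClosure_minimal
    · rw [Submodule.span_le]
      rintro w ⟨j, hj, rfl⟩
      simp only [SetLike.mem_coe, LinearMap.mem_ker, ContinuousLinearMap.coe_coe]
      rw [ev0_apply]
      simp only [eVec]
      rw [lp.single_apply]
      have : (0 : ℕ) ≠ j := by omega
      simp [Pi.single_apply, this]
    · exact ContinuousLinearMap.isClosed_ker ev0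
  exact hker hz

/-- for every `x ∈ ℓ²(-ℕ)` with `⟨x, e₋₁⟩ = 1` there is an invertible
operator `X` in the nest algebra, with inverse also in the nest algebra, such that
`X e₋₁ = x`. -/
theorem stmt17 (x : Hneg) (hx : (x : ∀ _ : ℕ, ℂ) 0 = 1) :
    ∃ X : Hneg →L[ℂ] Hneg, X ∈ NestAlg ∧
      (∃ Y ∈ NestAlg, X * Y = 1 ∧ Y * X = 1) ∧ X (eVec 0) = x := by
  set S : Hneg →L[ℂ] Hneg := ev0.smulRight (x - eVec 0) with hS
  have hSapp : ∀ z : Hneg, S z = (ev0 z) • (x - eVec 0) := fun z => rfl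
  have hx0 : ev0 (x - eVec 0) = 0 := by
    rw [ev0_apply]
    have h1 : ((eVec 0 : Hneg) : ∀ _ : ℕ, ℂ) 0 = 1 := by
      simp [eVec, lp.single_apply]
    simp [lp.coeFn_sub, Pi.sub_apply, hx, h1]
  have hSS : ∀ z : Hneg, S (S z) = 0 := by
    intro z
    rw [hSapp (S z), hSapp z, map_smul, hx0, smul_zero, zero_smul]
  refine ⟨1 + S, ?_, ⟨1 - S, ?_, ?_, ?_⟩, ?_⟩
  · intro m z hz
    have : S z = 0 := by rw [hSapp, ev0_eq_zero_of_mem_Vsub hz]; simp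
    simpa [this] using hz
  · intro m z hz
    have : S z = 0 := by rw [hSapp, ev0_eq_zero_of_mem_Vsub hz]; simp
    simpa [this] using hz
  · refine ContinuousLinearMap.ext fun z => ?_
    simp only [ContinuousLinearMap.mul_apply, ContinuousLinearMap.add_apply,
      ContinuousLinearMap.sub_apply, ContinuousLinearMap.one_apply, map_sub, map_add, hSS]
    module
  · refine ContinuousLinearMap.ext fun z => ?_
    simp only [ContinuousLinearMap.mul_apply, ContinuousLinearMap.add_apply,
      ContinuousLinearMap.sub_apply, ContinuousLinearMap.one_apply, map_sub, map_add, hSS]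
    module
  · have h1 : ev0 (eVec 0) = 1 := by
      rw [ev0_apply]; simp [eVec, lp.single_apply]
    rw [ContinuousLinearMap.add_apply, ContinuousLinearMap.one_apply, hSapp, h1, one_smul]
    abel
end
end

section
/- Let H = ℓ²(−ℕ) with basis (eₙ)ₙ≤−1, Pₙ the projection onto span{eₖ : k < n}, and T the corresponding nest algebra. Then every linear manifold M ⊆ H invariant under T is closed; moreover M is either 0, all of H, or equal to PₙH for some n, and M is singly generated: M = {Ax : A ∈ T} for some x ∈ H. -/
noncomputable section

-- evaluation as a continuous linear map
def ev (j : ℕ) : Hneg →L[ℂ] ℂ :=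
  LinearMap.mkContinuous
    { toFun := fun z => z j
      map_add' := fun a b => by
        have := lp.coeFn_add a b
        simp [lp.coeFn_add]
      map_smul' := fun c a => by simp [lp.coeFn_smul] }
    1 (fun z => by
      show ‖z j‖ ≤ 1 * ‖z‖
      simpa using lp.norm_apply_le_norm (p := 2) (by norm_num) z j)

@[simp] lemma ev_apply (j : ℕ) (z : Hneg) : ev j z = z j := rfl

-- rank one operator z ↦ z j • y
def Rk (y : Hneg) (j : ℕ) : Hneg →L[ℂ] Hneg := (ev j).smulRight y

@[simp] lemma Rk_apply (y : Hneg) (j : ℕ) (z : Hneg) : Rk y j z = z j • y := rfl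

lemma eVec_apply_self (m : ℕ) : (eVec m : Hneg) m = 1 :=
  lp.single_apply_self (E := fun _ : ℕ => ℂ) 2 m 1

lemma eVec_apply_ne {k m : ℕ} (h : k ≠ m) : (eVec m : Hneg) k = 0 :=
  lp.single_apply_ne (E := fun _ : ℕ => ℂ) 2 m 1 h

lemma mem_Vsub_iff (m : ℕ) (z : Hneg) : z ∈ Vsub m ↔ ∀ k ≤ m, z k = 0 := by
  constructor
  · intro hz k hk
    -- the set of z with z k = 0 is a closed submodule containing the generators
    have hcl : Vsub m ≤ LinearMap.ker ((ev k) : Hneg →ₗ[ℂ] ℂ) := by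
      apply Submodule.topologicalClosure_minimal
      · rw [Submodule.span_le]
        rintro w ⟨j, hj, rfl⟩
        simp only [SetLike.mem_coe, LinearMap.mem_ker]
        show eVec j k = 0
        exact eVec_apply_ne (by omega)
      · exact ContinuousLinearMap.isClosed_ker (ev k)
    exact hcl hz
  · intro hz
    have hsum := lp.hasSum_single (p := 2) (by norm_num) z
    have : Filter.Tendsto (fun s : Finset ℕ => ∑ i ∈ s, lp.single 2 i (z i))
        Filter.atTop (nhds z) := hsum
    refine mem_closure_of_tendsto this ?_
    filter_upwards with s
    refine Submodule.sum_mem _ ?_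
    intro i _
    have hsing : lp.single 2 i (z i) = z i • eVec i := by
      apply lp.ext; funext k
      rw [lp.coeFn_smul, Pi.smul_apply]
      by_cases hk : k = i
      · subst hk
        rw [lp.single_apply_self, eVec_apply_self, smul_eq_mul, mul_one]
      · rw [lp.single_apply_ne (E := fun _ : ℕ => ℂ) 2 i _ hk, eVec_apply_ne hk, smul_zero]
    rw [hsing]
    by_cases hi : i ≤ m
    · rw [hz i hi, zero_smul]; exact Submodule.zero_mem _
    · exact Submodule.smul_mem _ _ (Submodule.subset_span ⟨i, by omega, rfl⟩)

lemma Rk_mem_nestAlg (y : Hneg) (j : ℕ) (hy : ∀ k < j, y k = 0) : Rk y j ∈ NestAlg := by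
  intro m z hz
  rw [Rk_apply]
  rcases le_or_gt j m with h | h
  · rw [(mem_Vsub_iff m z).1 hz j h, zero_smul]
    exact Submodule.zero_mem _
  · exact Submodule.smul_mem _ _ ((mem_Vsub_iff m y).2 (fun k hk => hy k (by omega)))

lemma id_mem_nestAlg : (ContinuousLinearMap.id ℂ Hneg) ∈ NestAlg := fun m z hz => hz

/-- every linear manifold of `ℓ²(-ℕ)` invariant under the nest algebra of the
order type `-ℕ` nest is closed, is `0`, all of `H`, or `PₙH` for some `n`, and is singly
generated. -/
theorem stmt18 (M : Submodule ℂ Hneg)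
    (hM : ∀ T ∈ NestAlg, ∀ z ∈ M, T z ∈ M) :
    IsClosed (M : Set Hneg) ∧
    (M = ⊥ ∨ M = ⊤ ∨ ∃ m : ℕ, M = Vsub m) ∧
    ∃ x : Hneg, (M : Set Hneg) = {y : Hneg | ∃ T ∈ NestAlg, T x = y} := by
  classical
  by_cases hbot : M = ⊥
  · subst hbot
    refine ⟨by rw [Submodule.bot_coe]; exact isClosed_singleton, Or.inl rfl, 0, ?_⟩
    ext y
    simp only [Submodule.bot_coe, Set.mem_singleton_iff, Set.mem_setOf_eq]
    constructor
    · rintro rfl; exact ⟨_, id_mem_nestAlg, by simp⟩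
    · rintro ⟨T, _, rfl⟩; simp
  · -- M ≠ ⊥ : find minimal index
    obtain ⟨x, hxM, hx0⟩ := Submodule.exists_mem_ne_zero_of_ne_bot hbot
    have hP : ∃ j : ℕ, ∃ z ∈ M, z j ≠ 0 := by
      by_contra h
      push_neg at h
      exact hx0 (lp.ext (funext fun j => h j x hxM))
    set m₀ := Nat.find hP with hm₀
    obtain ⟨w, hwM, hw0⟩ := Nat.find_spec hP
    have hmin : ∀ z ∈ M, ∀ k < m₀, z k = 0 := by
      intro z hz k hk
      by_contra h
      exact Nat.find_min hP hk ⟨z, hz, h⟩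
    -- eVec m₀ ∈ M
    have heM : eVec m₀ ∈ M := by
      have hT : Rk ((w m₀)⁻¹ • eVec m₀) m₀ ∈ NestAlg := by
        apply Rk_mem_nestAlg
        intro k hk
        show ((w m₀)⁻¹ • eVec m₀ : Hneg) k = 0
        rw [lp.coeFn_smul, Pi.smul_apply, eVec_apply_ne (by omega : k ≠ m₀), smul_zero]
      have := hM _ hT w hwM
      rwa [Rk_apply, smul_smul, mul_inv_cancel₀ hw0, one_smul] at this
    -- membership of arbitrary supported vector
    have hsup : ∀ y : Hneg, (∀ k < m₀, y k = 0) → y ∈ M := by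
      intro y hy
      have hT : Rk y m₀ ∈ NestAlg := Rk_mem_nestAlg y m₀ hy
      have := hM _ hT (eVec m₀) heM
      rw [Rk_apply] at this
      rwa [eVec_apply_self, one_smul] at this
    have hMeq : (M : Set Hneg) = {y : Hneg | ∀ k < m₀, y k = 0} := by
      ext y
      exact ⟨fun hy k hk => hmin y hy k hk, fun hy => hsup y hy⟩
    have horbit : (M : Set Hneg) = {y : Hneg | ∃ T ∈ NestAlg, T (eVec m₀) = y} := by
      ext y
      constructor
      · intro hy
        exact ⟨Rk y m₀, Rk_mem_nestAlg y m₀ (hmin y hy), by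
          rw [Rk_apply, eVec_apply_self, one_smul]⟩
      · rintro ⟨T, hT, rfl⟩
        apply hsup
        intro k hk
        rcases Nat.eq_zero_or_pos m₀ with h0 | h0
        · omega
        · have hmem : eVec m₀ ∈ Vsub (m₀ - 1) := by
            rw [mem_Vsub_iff]
            intro k' hk'
            exact eVec_apply_ne (by omega)
          have := hT (m₀ - 1) _ hmem
          exact (mem_Vsub_iff _ _).1 this k (by omega)
    rcases Nat.eq_zero_or_pos m₀ with h0 | h0
    · have htop : M = ⊤ := by
        rw [Submodule.eq_top_iff']
        intro y
        exact hsup y (fun k hk => by omega)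
      refine ⟨by rw [htop]; simp, Or.inr (Or.inl htop), eVec m₀, horbit⟩
    · have hV : M = Vsub (m₀ - 1) := by
        apply le_antisymm
        · intro z hz
          rw [mem_Vsub_iff]
          intro k hk
          exact hmin z hz k (by omega)
        · intro z hz
          exact hsup z (fun k hk => (mem_Vsub_iff _ _).1 hz k (by omega))
      refine ⟨?_, Or.inr (Or.inr ⟨m₀ - 1, hV⟩), eVec m₀, horbit⟩
      rw [hV]
      exact Submodule.isClosed_topologicalClosure _
end
end

section
/- Let M be a von Neumann algebra on a Hilbert space H whose commutant M' is abelian and finite dimensional. Then every M-invariant linear manifold in H is closed. -/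
universe u

/-- A reduced finite-dimensional commutative `ℂ`-algebra has a complete system of
orthogonal idempotents spanning one-dimensional "blocks". -/
theorem aux_idem (R : Type u) [CommRing R] [Algebra ℂ R] [FiniteDimensional ℂ R]
    [IsReduced R] :
    ∃ (ι : Type u) (_ : Fintype ι) (e : ι → R),
      (∀ i j, i ≠ j → e i * e j = 0) ∧ (∑ i, e i = 1) ∧
      (∀ i (a : R), ∃ c : ℂ, a * e i = algebraMap ℂ R c * e i) := by
  haveI : IsArtinianRing R := IsArtinianRing.of_finite ℂ R
  haveI : Finite (MaximalSpectrum R) := inferInstance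
  haveI : Fintype (MaximalSpectrum R) := Fintype.ofFinite _
  classical
  set ψ := IsArtinianRing.equivPi R with hψ
  refine ⟨MaximalSpectrum R, inferInstance,
    fun i => ψ.symm (Pi.single i 1), ?_, ?_, ?_⟩
  · intro i j hij
    rw [← map_mul, ← map_zero ψ.symm]
    congr 1
    funext k
    rcases eq_or_ne k i with rfl | hki
    · simp [Pi.single_eq_of_ne hij]
    · simp [Pi.single_eq_of_ne hki]
  · rw [← map_sum, ← map_one ψ.symm]
    congr 1
    exact Finset.univ_sum_single (1 : ∀ I : MaximalSpectrum R, R ⧸ I.1)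
  · rintro I a
    haveI : I.1.IsMaximal := I.2
    letI : Field (R ⧸ I.1) := Ideal.Quotient.field I.1
    haveI : FiniteDimensional ℂ (R ⧸ I.1) :=
      Module.Finite.of_surjective (Ideal.Quotient.mkₐ ℂ I.1).toLinearMap
        (Ideal.Quotient.mk_surjective)
    obtain ⟨c, hc⟩ := (IsAlgClosed.algebraMap_bijective_of_isIntegral
      (k := ℂ) (K := R ⧸ I.1)).2 (Ideal.Quotient.mk I.1 a)
    refine ⟨c, ψ.injective ?_⟩
    rw [map_mul, map_mul, ψ.apply_symm_apply]
    funext k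
    by_cases hk : k = I
    · subst hk
      simp only [Pi.mul_apply, Pi.single_eq_same, mul_one]
      show Ideal.Quotient.mk k.1 a = Ideal.Quotient.mk k.1 (algebraMap ℂ R c)
      rw [← hc, IsScalarTower.algebraMap_apply ℂ R (R ⧸ k.1),
        Ideal.Quotient.algebraMap_eq]
    · simp [Pi.single_eq_of_ne hk]

/-- A normal nilpotent element of a C*-ring is zero. -/
theorem aux_nilpotent {E : Type*} [NormedRing E] [StarRing E] [CStarRing E] {T : E}
    (hcomm : Commute (star T) T) (hT : IsNilpotent T) : T = 0 := by
  obtain ⟨n, hn⟩ := hT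
  set b := star T * T with hb
  have hbsa : IsSelfAdjoint b := by
    simp [hb, IsSelfAdjoint, star_mul]
  have hbn : b ^ n = 0 := by
    rw [hb, hcomm.mul_pow, hn, mul_zero]
  have hb2 : b ^ 2 ^ n = 0 := by
    have hle : n ≤ 2 ^ n := Nat.le_of_lt (Nat.lt_two_pow_self)
    calc b ^ 2 ^ n = b ^ n * b ^ (2 ^ n - n) := by
          rw [← pow_add, Nat.add_sub_cancel' hle]
      _ = 0 := by rw [hbn, zero_mul]
  have hnb : ‖b‖₊ = 0 := by
    have := hbsa.nnnorm_pow_two_pow n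
    rw [hb2] at this
    rw [nnnorm_zero] at this
    exact (pow_eq_zero_iff (by positivity)).mp this.symm
  have hbz : b = 0 := by simpa using hnb
  have : ‖T‖₊ * ‖T‖₊ = 0 := by
    rw [← CStarRing.nnnorm_star_mul_self, ← hb, hbz, nnnorm_zero]
  have : ‖T‖₊ = 0 := by
    rcases mul_eq_zero.mp this with h | h <;> exact h
  simpa using this

/-- if `M` is a von Neumann algebra on `H` whose commutant is abelian and
finite dimensional, then every `M`-invariant linear manifold in `H` is closed. -/
theorem stmt19 {H : Type*} [NormedAddCommGroup H] [InnerProductSpace ℂ H] [CompleteSpace H]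
    (M : VonNeumannAlgebra H)
    (habelian : ∀ S ∈ M.commutant, ∀ T ∈ M.commutant, S * T = T * S)
    (hfd : FiniteDimensional ℂ M.commutant.toSubalgebra) :
    ∀ W : Submodule ℂ H, (∀ T ∈ M, ∀ x ∈ W, T x ∈ W) → IsClosed (W : Set H) := by
  classical
  intro W hW
  set A := M.commutant.toSubalgebra with hA
  have hmem : ∀ x : H →L[ℂ] H, x ∈ A ↔ x ∈ M.commutant := fun x => Iff.rfl
  -- the commutant is contained in M, since it is abelian
  have hMM : ∀ T ∈ M.commutant, T ∈ M := by
    intro T hT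
    rw [← M.commutant_commutant]
    exact VonNeumannAlgebra.mem_commutant_iff.mpr fun g hg => habelian g hg T hT
  letI : CommRing ↥A :=
    { (inferInstance : Ring ↥A) with
      mul_comm := fun a b => Subtype.ext (habelian a.1 a.2 b.1 b.2) }
  haveI : IsReduced ↥A := by
    refine ⟨fun a ha => ?_⟩
    obtain ⟨n, hn⟩ := ha
    have hTn : (a.1) ^ n = 0 := by
      have := congrArg (Subtype.val) hn
      simpa using this
    have hcomm : Commute (star a.1) a.1 :=
      habelian (star a.1) (star_mem (s := M.commutant) a.2) a.1 a.2
    exact Subtype.ext (aux_nilpotent hcomm ⟨n, hTn⟩)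
  obtain ⟨ι, hfin, e, horth, hsum, hmin⟩ := aux_idem ↥A
  set p : ι → (H →L[ℂ] H) := fun i => (e i).1 with hp
  have hpM : ∀ i, p i ∈ M := fun i => hMM _ (e i).2
  have hsum' : ∑ i, p i = 1 := by
    have := congrArg (Subtype.val) hsum
    simpa [hp] using this
  -- `p i * T * p i` lies in `M` for every bounded operator `T`
  have hblock : ∀ (i : ι) (T : H →L[ℂ] H), p i * T * p i ∈ M := by
    intro i T
    rw [← M.commutant_commutant]
    refine VonNeumannAlgebra.mem_commutant_iff.mpr fun g hg => ?_
    obtain ⟨c, hc⟩ := hmin i ⟨g, hg⟩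
    have hgp : g * p i = c • p i := by
      have := congrArg (Subtype.val) hc
      simpa [hp, Algebra.smul_def] using this
    have hpg : p i * g = c • p i := by
      rw [← habelian g hg (p i) (e i).2, hgp]
    calc g * (p i * T * p i) = (g * p i) * T * p i := by
          simp only [mul_assoc]
      _ = c • (p i * T * p i) := by rw [hgp, smul_mul_assoc, smul_mul_assoc]
      _ = p i * T * (p i * g) := by rw [hpg, mul_smul_comm]
      _ = (p i * T * p i) * g := by simp only [mul_assoc]
  -- the "support" of W
  set Sf : Finset ι := Finset.univ.filter (fun i => ∃ y ∈ W, p i y ≠ 0) with hSf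
  -- blocks meeting W are contained in W
  have key1 : ∀ i ∈ Sf, ∀ x : H, p i x ∈ W := by
    intro i hi x
    obtain ⟨y, hyW, hy0⟩ := (Finset.mem_filter.mp hi).2
    set z := p i y with hz
    set T : H →L[ℂ] H := (innerSL ℂ z).smulRight x with hT
    have happ : (p i * T * p i) y = (inner ℂ z z : ℂ) • p i x := by
      simp [hT, ContinuousLinearMap.mul_apply, ← hz, map_smul]
    have hWmem : (inner ℂ z z : ℂ) • p i x ∈ W := by
      rw [← happ]
      exact hW _ (hblock i T) y hyW
    have hzz : (inner ℂ z z : ℂ) ≠ 0 := inner_self_ne_zero.mpr hy0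
    have := W.smul_mem ((inner ℂ z z : ℂ))⁻¹ hWmem
    rwa [inv_smul_smul₀ hzz] at this
  set P : H →L[ℂ] H := ∑ i ∈ Sf, p i with hP
  have hWP : (W : Set H) = {x | P x = x} := by
    ext x
    constructor
    · intro hx
      show P x = x
      have hx1 : (∑ i, p i) x = x := by rw [hsum']; rfl
      rw [ContinuousLinearMap.sum_apply] at hx1
      have : ∑ i ∈ Sf, p i x = ∑ i, p i x := by
        refine Finset.sum_subset (Finset.subset_univ _) fun j _ hj => ?_
        by_contra h0
        exact hj (Finset.mem_filter.mpr ⟨Finset.mem_univ _, ⟨x, hx, h0⟩⟩)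
      rw [hP, ContinuousLinearMap.sum_apply, this, hx1]
    · intro hx
      have : P x ∈ W := by
        rw [hP, ContinuousLinearMap.sum_apply]
        exact W.sum_mem fun i hi => key1 i hi x
      rwa [hx] at this
  rw [hWP]
  exact isClosed_eq P.continuous continuous_id
end
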